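/- Let H be a connected graded Hopf algebra and A = ℂ[z⁻¹][[z]]. For the dimensional regularization action σ_t(φ)(a) = t^{zn}φ(a) (a ∈ Hₙ), the geometric beta function β(φ) = [σ_t(φ)^{⋆−1} ⋆ t∂_t σ_t(φ)]|_{t=1} equals z·(φ^{⋆−1} ⋆ (φ∘Y)), where Y is the grading operator. -/

import Mathlib

open TensorProduct

variable {H : Type*} [CommRing H] [HopfAlgebra ℂ H]

/-- Convolution product of linear maps `H → A`: `f ⋆ g = m_A ∘ (f ⊗ g) ∘ Δ`. -/
noncomputable def conv {A : Type*} [CommRing A] [Algebra ℂ A]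
    (f g : H →ₗ[ℂ] A) : H →ₗ[ℂ] A :=
  (LinearMap.mul' ℂ A) ∘ₗ (TensorProduct.map f g) ∘ₗ (Coalgebra.comul (R := ℂ) (A := H))

/-- The formal element `t^{zn} = exp(zn·log t) = Σ_k (n log t)^k z^k / k!`
as a Laurent series in `z`, for `t ∈ ℝ_{>0}`. -/
noncomputable def tPow (t : ℝ) (n : ℕ) : LaurentSeries ℂ :=
  HahnSeries.ofPowerSeries ℤ ℂ
    (PowerSeries.mk fun k => ((n * Real.log t : ℝ) : ℂ) ^ k / (k.factorial : ℂ))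

lemma tPow_coeff (t : ℝ) (n : ℕ) (j : ℤ) :
    (tPow t n).coeff j = if 0 ≤ j then
      ((n * Real.log t : ℝ) : ℂ) ^ j.toNat / (j.toNat.factorial : ℂ) else 0 := by
  by_cases h : 0 ≤ j
  · rw [if_pos h]
    conv_lhs => rw [show j = (j.toNat : ℤ) by omega]
    rw [tPow, HahnSeries.ofPowerSeries_apply_coeff, PowerSeries.coeff_mk]
  · rw [if_neg h, tPow, HahnSeries.ofPowerSeries_apply, HahnSeries.embDomain_notin_range]
    rintro ⟨k, hk⟩
    exact h (hk ▸ Int.natCast_nonneg k)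

lemma tPow_support (t : ℝ) (n : ℕ) : (tPow t n).support ⊆ Set.Ici (0 : ℤ) := by
  intro j hj
  simp only [HahnSeries.mem_support] at hj
  by_contra h
  rw [tPow_coeff] at hj
  exact hj (if_neg fun hh : 0 ≤ j => h hh)

lemma isPWO_Ici : (Set.Ici (0 : ℤ)).IsPWO :=
  Set.IsWF.isPWO ((bddBelow_Ici).wellFoundedOn_lt)

lemma deriv_val (n k : ℕ) :
    ((k : ℂ) * (0:ℂ) ^ (k-1) * (n:ℂ)) / (k.factorial : ℂ)
      = if (k : ℤ) = 1 then (n:ℂ) else 0 := by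
  match k with
  | 0 => simp
  | 1 => simp
  | (m+2) => rw [if_neg (by omega)]; simp [pow_succ]

lemma hasDerivAt_ck (n k : ℕ) :
    HasDerivAt (fun t : ℝ => ((n * Real.log t : ℝ) : ℂ) ^ k / (k.factorial : ℂ))
      (((k : ℂ) * (0:ℂ) ^ (k-1) * (n:ℂ)) / (k.factorial : ℂ)) 1 := by
  have hlog : HasDerivAt Real.log 1 1 := by
    simpa using Real.hasDerivAt_log one_ne_zero
  have h1 : HasDerivAt (fun t : ℝ => (n : ℝ) * Real.log t) (n : ℝ) 1 := by
    simpa using hlog.const_mul (n : ℝ)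
  have h2 := (h1.pow k).ofReal_comp
  have h3 := h2.div_const (k.factorial : ℂ)
  simpa [Real.log_one] using h3

lemma key_deriv (n : ℕ) (b : LaurentSeries ℂ) (i : ℤ) :
    HasDerivAt (fun t : ℝ => (tPow t n * b).coeff i)
      ((HahnSeries.single (1 : ℤ) (n : ℂ) * b).coeff i) 1 := by
  have hfun : (fun t : ℝ => (tPow t n * b).coeff i)
      = fun t => ∑ ij ∈ Finset.addAntidiagonal isPWO_Ici b.isPWO_support i,
          (tPow t n).coeff ij.1 * b.coeff ij.2 :=
    funext fun t => HahnSeries.coeff_mul_left' isPWO_Ici (tPow_support t n)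
  rw [hfun]
  have hsum : HasDerivAt
      (fun t : ℝ => ∑ ij ∈ Finset.addAntidiagonal isPWO_Ici b.isPWO_support i,
          (tPow t n).coeff ij.1 * b.coeff ij.2)
      (∑ ij ∈ Finset.addAntidiagonal isPWO_Ici b.isPWO_support i,
          (if ij.1 = 1 then (n : ℂ) else 0) * b.coeff ij.2) 1 := by
    apply HasDerivAt.fun_sum
    intro ij hij
    have h0 : (0 : ℤ) ≤ ij.1 := by
      simp only [Finset.addAntidiagonal, Finset.mem_addAntidiagonal] at hij
      exact hij.1
    have hcoe : (fun t : ℝ => (tPow t n).coeff ij.1 * b.coeff ij.2)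
        = fun t => (((n * Real.log t : ℝ) : ℂ) ^ ij.1.toNat / (ij.1.toNat.factorial : ℂ))
            * b.coeff ij.2 := by
      funext t; rw [tPow_coeff, if_pos h0]
    rw [hcoe]
    have := (hasDerivAt_ck n ij.1.toNat).mul_const (b.coeff ij.2)
    rw [deriv_val] at this
    rwa [if_congr (show ((ij.1.toNat : ℤ) = 1 ↔ ij.1 = 1) from by omega) rfl rfl] at this
  convert hsum using 1
  rw [show i = (i - 1) + 1 by ring, HahnSeries.coeff_single_mul_add]
  rw [Finset.sum_eq_single ((1 : ℤ), i - 1)]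
  · simp
  · rintro ⟨j1, j2⟩ hmem hne
    simp only [Finset.addAntidiagonal, Finset.mem_addAntidiagonal] at hmem
    have : j1 ≠ 1 := by
      rintro rfl
      exact hne (by rw [Prod.mk.injEq]; exact ⟨rfl, by omega⟩)
    simp [this]
  · intro hnot
    simp only [Finset.addAntidiagonal, Finset.mem_addAntidiagonal, Set.mem_Ici, HahnSeries.mem_support] at hnot
    have : b.coeff (i - 1) = 0 := by
      by_contra hb
      exact hnot ⟨by norm_num, hb, by ring⟩
    simp [this]

theorem dr_beta_function_formula
    {A : Type*} [CommRing A] [Algebra ℂ A]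
    -- A = ℂ[z⁻¹][[z]], with z the distinguished element zA:
    (e : A ≃ₐ[ℂ] LaurentSeries ℂ) (zA : A)
    (hzA : e zA = HahnSeries.single (1 : ℤ) (1 : ℂ))
    (𝒜 : ℕ → Submodule ℂ H) [GradedAlgebra 𝒜] (hconn : 𝒜 0 = 1)
    (Y : H →ₗ[ℂ] H) (hY : ∀ n : ℕ, ∀ a ∈ 𝒜 n, Y a = (n : ℂ) • a)
    (φ : H →ₐ[ℂ] A)
    (σ : ℝ → (H →ₗ[ℂ] A) → (H →ₗ[ℂ] A))
    -- σ_t scales the graded piece Hₙ by t^{zn}: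
    (hσ : ∀ (t : ℝ) (f : H →ₗ[ℂ] A) (n : ℕ), ∀ a ∈ 𝒜 n,
      e ((σ t f) a) = tPow t n * e (f a))
    -- Dσ = t∂_t σ_t(φ)|_{t=1}, the coefficientwise derivative at t = 1:
    (Dσ : H →ₗ[ℂ] A)
    (hDσ : ∀ (a : H) (i : ℤ),
      HasDerivAt (fun t : ℝ => (e ((σ t φ.toLinearMap) a)).coeff i)
        ((e (Dσ a)).coeff i) 1)
    -- β(φ) = [σ_t(φ)^{⋆−1} ⋆ t∂_t σ_t(φ)]|_{t=1} = φ^{⋆−1} ⋆ Dσ: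
    (β : H →ₗ[ℂ] A)
    (hβ : β = conv (φ.toLinearMap ∘ₗ HopfAlgebra.antipode (R := ℂ)) Dσ) :
    ∀ x : H, β x = zA *
      (conv (φ.toLinearMap ∘ₗ HopfAlgebra.antipode (R := ℂ))
        (φ.toLinearMap ∘ₗ Y)) x := by
  classical
  -- Step 1: on homogeneous elements, Dσ a = zA * φ (Y a)
  have hsub : ∀ (n : ℕ), ∀ a ∈ 𝒜 n, Dσ a = zA * φ (Y a) := by
    intro n a ha
    apply e.injective
    have key : e (Dσ a) = HahnSeries.single (1:ℤ) (n:ℂ) * e (φ a) := by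
      apply HahnSeries.coeff_injective
      funext i
      have hd := hDσ a i
      have hfun : (fun t : ℝ => (e ((σ t φ.toLinearMap) a)).coeff i)
          = fun t => (tPow t n * e (φ a)).coeff i :=
        funext fun t => by rw [hσ t φ.toLinearMap n a ha]; rfl
      rw [hfun] at hd
      exact hd.unique (key_deriv n (e (φ a)) i)
    rw [key, map_mul, hzA, hY n a ha, map_smul, Algebra.smul_def, map_mul,
      AlgEquiv.commutes, ← mul_assoc]
    congr 1
    have hc : algebraMap ℂ (LaurentSeries ℂ) (n : ℂ) = HahnSeries.single (0 : ℤ) (n : ℂ) := by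
      rw [HahnSeries.algebraMap_apply',
        show algebraMap ℂ (PowerSeries ℂ) ((n : ℕ) : ℂ) = PowerSeries.C ((n : ℕ) : ℂ) from rfl,
        HahnSeries.ofPowerSeries_C, HahnSeries.C_apply]
    rw [hc, HahnSeries.single_mul_single]
    simp
  -- Step 2: Dσ = (mul by zA) ∘ φ ∘ Y everywhere
  have hall : ∀ y : H, Dσ y = zA * φ (Y y) :=
    DirectSum.Decomposition.inductionOn 𝒜 (by simp)
      (fun {i} m => hsub i m m.2)
      (fun a b ha hb => by simp [map_add, mul_add, ha, hb])
  have hD : Dσ = (LinearMap.mulLeft ℂ zA) ∘ₗ (φ.toLinearMap ∘ₗ Y) :=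
    LinearMap.ext fun y => by simpa using hall y
  -- Step 3: conv f (zA • g) = zA • conv f g
  have h2 : ∀ (f g : H →ₗ[ℂ] A),
      (LinearMap.mul' ℂ A) ∘ₗ (TensorProduct.map f ((LinearMap.mulLeft ℂ zA) ∘ₗ g))
        = (LinearMap.mulLeft ℂ zA) ∘ₗ ((LinearMap.mul' ℂ A) ∘ₗ TensorProduct.map f g) := by
    intro f g
    apply TensorProduct.ext'
    intro u v
    simp [LinearMap.mul'_apply, mul_left_comm]
  intro x
  rw [hβ, hD]
  simp only [conv, LinearMap.comp_apply]
  have := LinearMap.congr_fun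
    (h2 (φ.toLinearMap ∘ₗ HopfAlgebra.antipode (R := ℂ)) (φ.toLinearMap ∘ₗ Y))
    (Coalgebra.comul (R := ℂ) x)
  simpa [LinearMap.mulLeft_apply] using this
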